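/- Let Φ be a propositional formula rewritten as a disjunction of Horn clauses Φ' = Φ'_1 ∨ … ∨ Φ'_k, and let H(Φ, Φ') be the set of agents controlling at least one variable occurring in some single Horn disjunct Φ'_i whose modification can turn Φ from false to true. If a state θ falsifies Φ and a state θ' is obtained from θ by modifying only variables controlled by agents not in H(Φ, Φ'), then θ' also falsifies Φ. -/

import Mathlib

/-- Propositional formulas over variables in `V`. -/
inductive PropForm (V : Type*) where
  | var : V → PropForm V
  | neg : PropForm V → PropForm V
  | and : PropForm V → PropForm V → PropForm V
  | or  : PropForm V → PropForm V → PropForm V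

def PropForm.eval {V : Type*} (θ : V → Bool) : PropForm V → Bool
  | .var v => θ v
  | .neg φ => !(φ.eval θ)
  | .and φ ψ => φ.eval θ && ψ.eval θ
  | .or φ ψ => φ.eval θ || ψ.eval θ

structure Lit (V : Type*) where
  var : V
  pos : Bool

def Lit.eval {V : Type*} (θ : V → Bool) (l : Lit V) : Bool :=
  if l.pos then θ l.var else !(θ l.var)

abbrev Clause (V : Type*) := List (Lit V)

def Clause.eval {V : Type*} (θ : V → Bool) (c : Clause V) : Bool :=
  List.any c (fun l => l.eval θ)

/-- Evaluation of a CNF (a Horn disjunct). -/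
def CNF.eval {V : Type*} (θ : V → Bool) (cnf : List (Clause V)) : Bool :=
  List.all cnf (fun c => c.eval θ)

/-- A CNF is Horn iff every clause has at most one positive literal. -/
def IsHorn {V : Type*} (cnf : List (Clause V)) : Prop :=
  ∀ c ∈ cnf, (List.filter (fun l => l.pos) c).length ≤ 1

/-- The variable `v` occurs in the Horn disjunct `d`. -/
def occursIn {V : Type*} (v : V) (d : List (Clause V)) : Prop :=
  ∃ c ∈ d, ∃ l ∈ c, l.var = v

/-- `H Φ ds control` : the set of agents controlling at least one variable that
occurs in a single Horn disjunct of the rewriting `ds` of `Φ` and whose flipping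
can turn `Φ` from false to true in some state. -/
def H {V Ag : Type*} [DecidableEq V] (Φ : PropForm V) (ds : List (List (Clause V)))
    (control : V → Ag) : Set Ag :=
  {a | ∃ v, control v = a ∧ (∃ d ∈ ds, occursIn v d) ∧
        ∃ θ : V → Bool, Φ.eval θ = false ∧
          Φ.eval (Function.update θ v (!θ v)) = true}

lemma list_any_congr {α : Type*} (l : List α) (f g : α → Bool)
    (h : ∀ a ∈ l, f a = g a) : l.any f = l.any g := by
  induction l with
  | nil => rfl
  | cons a t ih =>
    simp only [List.any_cons, h a List.mem_cons_self,
      ih (fun b hb => h b (List.mem_cons_of_mem a hb))]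

lemma list_all_congr {α : Type*} (l : List α) (f g : α → Bool)
    (h : ∀ a ∈ l, f a = g a) : l.all f = l.all g := by
  induction l with
  | nil => rfl
  | cons a t ih =>
    simp only [List.all_cons, h a List.mem_cons_self,
      ih (fun b hb => h b (List.mem_cons_of_mem a hb))]

lemma key_step {V Ag : Type*} [DecidableEq V] (Φ : PropForm V)
    (ds : List (List (Clause V)))
    (hequiv : ∀ θ : V → Bool, Φ.eval θ = List.any ds (fun d => CNF.eval θ d))
    (control : V → Ag) (v : V) (hv : control v ∉ H Φ ds control)
    (θ : V → Bool) (hf : Φ.eval θ = false) :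
    Φ.eval (Function.update θ v (!θ v)) = false := by
  by_cases hocc : ∃ d ∈ ds, occursIn v d
  · by_contra h
    have h' : Φ.eval (Function.update θ v (!θ v)) = true := by
      simpa using h
    exact hv ⟨v, rfl, hocc, θ, hf, h'⟩
  · rw [hequiv] at hf ⊢
    have : ∀ d ∈ ds, CNF.eval (Function.update θ v (!θ v)) d = CNF.eval θ d := by
      intro d hd
      have hno : ¬ occursIn v d := fun h => hocc ⟨d, hd, h⟩
      unfold CNF.eval
      apply list_all_congr
      intro c hc
      unfold Clause.eval
      apply list_any_congr
      intro l hl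
      have hne : l.var ≠ v := fun h => hno ⟨c, hc, l, hl, h⟩
      unfold Lit.eval
      rw [Function.update_of_ne hne]
    rw [list_any_congr ds _ _ this]
    exact hf

/-- If `Φ'` (given by the list of Horn disjuncts `ds`) is a rewriting of `Φ` as a
disjunction of Horn clauses, no agent of `H(Φ,Φ')` modifies variables (i.e., all
variables on which θ' differs from θ are controlled by agents outside `H(Φ,Φ')`),
and `θ` falsifies `Φ`, then `θ'` also falsifies `Φ`. -/
theorem falsify_preserved {V Ag : Type*} [Fintype V] [DecidableEq V]
    (Φ : PropForm V) (ds : List (List (Clause V)))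
    (hhorn : ∀ d ∈ ds, IsHorn d)
    (hequiv : ∀ θ : V → Bool, Φ.eval θ = List.any ds (fun d => CNF.eval θ d))
    (control : V → Ag)
    (θ θ' : V → Bool)
    (hmod : ∀ v, θ v ≠ θ' v → control v ∉ H Φ ds control)
    (hfalse : Φ.eval θ = false) :
    Φ.eval θ' = false := by
  classical
  suffices h : ∀ (S : Finset V) (θ₀ : V → Bool),
      (∀ v, θ₀ v ≠ θ' v → v ∈ S) →
      (∀ v, θ₀ v ≠ θ' v → θ v ≠ θ' v) →
      Φ.eval θ₀ = false → Φ.eval θ' = false by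
    exact h Finset.univ θ (fun v _ => Finset.mem_univ v) (fun _ h => h) hfalse
  intro S
  induction S using Finset.strongInduction with
  | _ S ih =>
    intro θ₀ hS hdiff hf
    by_cases hd : ∀ v, θ₀ v = θ' v
    · have : θ₀ = θ' := funext hd
      rwa [this] at hf
    · push_neg at hd
      obtain ⟨v, hv⟩ := hd
      have hvS : v ∈ S := hS v hv
      have hflip : θ' v = !θ₀ v := by
        revert hv; cases h1 : θ₀ v <;> cases h2 : θ' v <;> simp
      set θ₁ := Function.update θ₀ v (!θ₀ v) with hθ₁
      have hf₁ : Φ.eval θ₁ = false :=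
        key_step Φ ds hequiv control v (hmod v (hdiff v hv)) θ₀ hf
      refine ih (S.erase v) (Finset.erase_ssubset hvS) θ₁ ?_ ?_ hf₁
      · intro w hw
        rcases eq_or_ne w v with rfl | hwv
        · exfalso
          apply hw
          rw [hθ₁, Function.update_self, hflip]
        · rw [Finset.mem_erase]
          refine ⟨hwv, hS w ?_⟩
          rwa [hθ₁, Function.update_of_ne hwv] at hw
      · intro w hw
        rcases eq_or_ne w v with rfl | hwv
        · exact hdiff _ hv
        · rw [hθ₁, Function.update_of_ne hwv] at hw
          exact hdiff w hw
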